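/- arXiv:1701.00799 — 3 statements merged into one kernel-verified Lean document; each statement's English description precedes it below -/
import Mathlib

section
/- Let A(z) = ∑ A_n z^n and B(z) = ∑ B_n z^n be power series (with coefficients in a normed space) analytic on the open unit disk with A(1) = B(1) = 0 (i.e., ∑ A_n = ∑ B_n = 0), and suppose ‖A_n‖ ≤ K n^{-(β+1)} and ‖B_n‖ ≤ K n^{-(β+1)} for some β > 0 and K > 0. Define C(z) = (1-z)^{-1} A(z) B(z) with coefficients C_n. Then ‖C_n‖ = O(n^{-2β}) if 0 < β < 1, ‖C_n‖ = O((log n) n^{-2}) if β = 1, and ‖C_n‖ = O(n^{-(β+1)}) if β > 1. -/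
open Filter Asymptotics Finset

private lemma geo_aux {t β : ℝ} (ht0 : 0 < t) (ht1 : t < 1) (hβ : 0 < β) :
    (1 - t) ^ β * (1 + β * t) ≤ 1 := by
  have h1t : (0:ℝ) < 1 - t := by linarith
  have h1 : (1 - t : ℝ) ^ β = Real.exp (Real.log (1 - t) * β) := by
    rw [Real.rpow_def_of_pos h1t]
  have h2 : Real.log (1 - t) ≤ -t := by
    have := Real.log_le_sub_one_of_pos h1t
    linarith
  have h3 : (1 - t) ^ β ≤ Real.exp (-(β * t)) := by
    rw [h1]
    apply Real.exp_le_exp.2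
    nlinarith
  have h4 : 1 + β * t ≤ Real.exp (β * t) := by
    have := Real.add_one_le_exp (β * t); linarith
  have h5 : (0:ℝ) ≤ 1 + β * t := by nlinarith
  calc (1 - t) ^ β * (1 + β * t) ≤ Real.exp (-(β * t)) * Real.exp (β * t) :=
        mul_le_mul h3 h4 h5 (Real.exp_nonneg _)
    _ = 1 := by rw [← Real.exp_add]; simp

private lemma key_ineq {β x : ℝ} (hβ : 0 < β) (hx : 1 ≤ x) :
    β * (x + 1) ^ (-(β + 1)) ≤ x ^ (-β) - (x + 1) ^ (-β) := by
  have hx0 : (0:ℝ) < x := by linarith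
  have hx1 : (0:ℝ) < x + 1 := by linarith
  set t : ℝ := 1 / (x + 1) with ht
  have ht0 : 0 < t := by positivity
  have ht1 : t < 1 := by rw [ht, div_lt_one hx1]; linarith
  have h1t : (0:ℝ) < 1 - t := by linarith
  have hxe : x = (x + 1) * (1 - t) := by rw [ht]; field_simp; ring
  have hpow : (x + 1) ^ (-β) * (1 - t) ^ (-β) = x ^ (-β) := by
    rw [← Real.mul_rpow hx1.le h1t.le, ← hxe]
  have hgeo := geo_aux ht0 ht1 hβ
  have hp : (0:ℝ) < (1 - t) ^ β := Real.rpow_pos_of_pos h1t β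
  have h2 : 1 + β * t ≤ (1 - t) ^ (-β) := by
    rw [Real.rpow_neg h1t.le]
    have h := mul_le_mul_of_nonneg_right hgeo (inv_nonneg.2 hp.le)
    rw [one_mul] at h
    calc 1 + β * t = (1 - t) ^ β * (1 + β * t) * ((1 - t) ^ β)⁻¹ := by
          field_simp
      _ ≤ ((1 - t) ^ β)⁻¹ := h
  have h3 : (x + 1) ^ (-β) * (1 + β * t) ≤ x ^ (-β) := by
    rw [← hpow]
    exact mul_le_mul_of_nonneg_left h2 (Real.rpow_nonneg hx1.le _)
  have h4 : (x + 1) ^ (-(β + 1)) = (x + 1) ^ (-β) * (x + 1)⁻¹ := by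
    rw [show -(β + 1) = (-β) + (-1) by ring, Real.rpow_add hx1, Real.rpow_neg_one]
  have ht' : t = (x + 1)⁻¹ := one_div _
  rw [h4]
  rw [ht'] at h3
  nlinarith [h3, Real.rpow_nonneg hx1.le (-β)]

private lemma bern_ineq {γ : ℝ} (hγ0 : 0 < γ) (hγ1 : γ ≤ 1) (x : ℝ) (hx : 0 ≤ x) :
    γ * (x + 1) ^ (γ - 1) ≤ (x + 1) ^ γ - x ^ γ := by
  rcases eq_or_lt_of_le hx with h0 | hx0
  · rw [← h0]
    simp only [zero_add, Real.one_rpow, Real.zero_rpow hγ0.ne', sub_zero]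
    linarith
  · have hx1 : (0:ℝ) < x + 1 := by linarith
    set t : ℝ := 1 / (x + 1) with ht
    have ht0 : 0 < t := by positivity
    have ht1 : t < 1 := by rw [ht, div_lt_one hx1]; linarith
    have h1t : (0:ℝ) < 1 - t := by linarith
    have hAM : (1 - t) ^ γ ≤ 1 - γ * t := by
      have h := Real.geom_mean_le_arith_mean2_weighted hγ0.le
        (by linarith : (0:ℝ) ≤ 1 - γ) h1t.le zero_le_one (by ring)
      rw [Real.one_rpow, mul_one, mul_one] at h
      calc (1 - t) ^ γ ≤ γ * (1 - t) + (1 - γ) := h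
        _ = 1 - γ * t := by ring
    have hxe : x = (x + 1) * (1 - t) := by rw [ht]; field_simp; ring
    have hpow : (x + 1) ^ γ * (1 - t) ^ γ = x ^ γ := by
      rw [← Real.mul_rpow hx1.le h1t.le, ← hxe]
    have h3 : x ^ γ ≤ (x + 1) ^ γ * (1 - γ * t) := by
      rw [← hpow]
      exact mul_le_mul_of_nonneg_left hAM (Real.rpow_nonneg hx1.le _)
    have h4 : (x + 1) ^ (γ - 1) = (x + 1) ^ γ * (x + 1)⁻¹ := by
      rw [show γ - 1 = γ + (-1) by ring, Real.rpow_add hx1, Real.rpow_neg_one]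
    have ht' : t = (x + 1)⁻¹ := one_div _
    rw [h4]
    rw [ht'] at h3
    nlinarith [h3, Real.rpow_nonneg hx1.le γ]

private lemma log_ineq {x : ℝ} (hx : 1 ≤ x) :
    (x + 1)⁻¹ ≤ Real.log (x + 1) - Real.log x := by
  have hx0 : (0:ℝ) < x := by linarith
  have hx1 : (0:ℝ) < x + 1 := by linarith
  have h : Real.log (x / (x + 1)) ≤ x / (x + 1) - 1 :=
    Real.log_le_sub_one_of_pos (by positivity)
  rw [Real.log_div hx0.ne' hx1.ne'] at h
  have h2 : x / (x + 1) - 1 = -(x + 1)⁻¹ := by field_simp; ring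
  rw [h2] at h
  linarith

private lemma tail_sum {β : ℝ} (hβ : 0 < β) (m : ℕ) (hm : 1 ≤ m) (N : ℕ) :
    ∑ j ∈ range N, ((j + m + 1 : ℕ) : ℝ) ^ (-(β + 1)) ≤ β⁻¹ * (m : ℝ) ^ (-β) := by
  set g : ℕ → ℝ := fun j => ((j + m : ℕ) : ℝ) ^ (-β) with hg
  have hterm : ∀ j : ℕ, ((j + m + 1 : ℕ) : ℝ) ^ (-(β + 1)) ≤ β⁻¹ * (g j - g (j + 1)) := by
    intro j
    have hx : (1:ℝ) ≤ ((j + m : ℕ) : ℝ) := by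
      have : 1 ≤ j + m := by omega
      exact_mod_cast this
    have h := key_ineq hβ hx
    have hc : ((j + m + 1 : ℕ) : ℝ) = ((j + m : ℕ) : ℝ) + 1 := by push_cast; ring
    have hc2 : ((j + 1 + m : ℕ) : ℝ) = ((j + m : ℕ) : ℝ) + 1 := by push_cast; ring
    rw [hg]
    simp only []
    rw [hc, hc2]
    have := mul_le_mul_of_nonneg_left h (inv_nonneg.2 hβ.le)
    rw [← mul_assoc, inv_mul_cancel₀ hβ.ne', one_mul] at this
    linarith
  calc ∑ j ∈ range N, ((j + m + 1 : ℕ) : ℝ) ^ (-(β + 1))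
      ≤ ∑ j ∈ range N, β⁻¹ * (g j - g (j + 1)) := sum_le_sum fun j _ => hterm j
    _ = β⁻¹ * ∑ j ∈ range N, (g j - g (j + 1)) := by rw [mul_sum]
    _ = β⁻¹ * (g 0 - g N) := by rw [sum_range_sub' g]
    _ ≤ β⁻¹ * (m : ℝ) ^ (-β) := by
        have h1 : (0:ℝ) ≤ g N := Real.rpow_nonneg (Nat.cast_nonneg _) _
        have h2 : g 0 = (m : ℝ) ^ (-β) := by rw [hg]; norm_num
        have := inv_nonneg.2 hβ.le
        nlinarith [this]

private lemma psum_lt {β : ℝ} (hβ0 : 0 < β) (hβ1 : β < 1) (N : ℕ) :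
    ∑ i ∈ range N, ((i + 1 : ℕ) : ℝ) ^ (-β) ≤ (1 - β)⁻¹ * (N : ℝ) ^ (1 - β) := by
  set γ : ℝ := 1 - β with hγ
  have hγ0 : 0 < γ := by rw [hγ]; linarith
  set g : ℕ → ℝ := fun i => ((i : ℕ) : ℝ) ^ γ with hg
  have hterm : ∀ i : ℕ, ((i + 1 : ℕ) : ℝ) ^ (-β) ≤ γ⁻¹ * (g (i + 1) - g i) := by
    intro i
    have h := bern_ineq hγ0 (by rw [hγ]; linarith) (i : ℝ) (Nat.cast_nonneg i)
    have hc : ((i + 1 : ℕ) : ℝ) = (i : ℝ) + 1 := by push_cast; ring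
    have he : γ - 1 = -β := by rw [hγ]; ring
    rw [he] at h
    rw [hg]
    simp only []
    rw [hc]
    have := mul_le_mul_of_nonneg_left h (inv_nonneg.2 hγ0.le)
    rw [← mul_assoc, inv_mul_cancel₀ hγ0.ne', one_mul] at this
    linarith
  calc ∑ i ∈ range N, ((i + 1 : ℕ) : ℝ) ^ (-β)
      ≤ ∑ i ∈ range N, γ⁻¹ * (g (i + 1) - g i) := sum_le_sum fun i _ => hterm i
    _ = γ⁻¹ * (g N - g 0) := by rw [← mul_sum, sum_range_sub g]
    _ = γ⁻¹ * (N : ℝ) ^ γ := by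
        rw [hg]; simp only []
        rw [Nat.cast_zero, Real.zero_rpow hγ0.ne']
        ring
    _ = (1 - β)⁻¹ * (N : ℝ) ^ (1 - β) := by rw [hγ]

private lemma psum_one (N : ℕ) :
    ∑ i ∈ range N, ((i + 1 : ℕ) : ℝ)⁻¹ ≤ 1 + Real.log N := by
  cases N with
  | zero => simp
  | succ N' =>
    have hlogN : (0:ℝ) ≤ Real.log (N' + 1 : ℕ) := by
      apply Real.log_nonneg
      exact_mod_cast Nat.succ_le_succ (Nat.zero_le N')
    rw [Finset.sum_range_succ']
    have hterm : ∀ i : ℕ, ((i + 1 + 1 : ℕ) : ℝ)⁻¹ ≤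
        Real.log ((i + 1 + 1 : ℕ) : ℝ) - Real.log ((i + 1 : ℕ) : ℝ) := by
      intro i
      have hx : (1:ℝ) ≤ ((i + 1 : ℕ) : ℝ) := by exact_mod_cast Nat.succ_le_succ (Nat.zero_le i)
      have := log_ineq hx
      have hc : ((i + 1 + 1 : ℕ) : ℝ) = ((i + 1 : ℕ) : ℝ) + 1 := by push_cast; ring
      rw [hc]
      exact this
    have hsum : ∑ i ∈ range N', ((i + 1 + 1 : ℕ) : ℝ)⁻¹ ≤ Real.log ((N' + 1 : ℕ) : ℝ) := by
      calc ∑ i ∈ range N', ((i + 1 + 1 : ℕ) : ℝ)⁻¹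
          ≤ ∑ i ∈ range N', (Real.log ((i + 1 + 1 : ℕ) : ℝ) - Real.log ((i + 1 : ℕ) : ℝ)) :=
            sum_le_sum fun i _ => hterm i
        _ = Real.log ((N' + 1 : ℕ) : ℝ) - Real.log ((0 + 1 : ℕ) : ℝ) :=
            sum_range_sub (fun i => Real.log ((i + 1 : ℕ) : ℝ)) N'
        _ ≤ Real.log ((N' + 1 : ℕ) : ℝ) := by norm_num
    have h0 : (((0:ℕ) + 1 : ℕ) : ℝ)⁻¹ = 1 := by norm_num
    push_cast at hsum ⊢
    linarith

private lemma psum_gt {β : ℝ} (hβ : 1 < β) (N : ℕ) :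
    ∑ i ∈ range N, ((i + 1 : ℕ) : ℝ) ^ (-β) ≤ 1 + (β - 1)⁻¹ := by
  have hβ1 : 0 < β - 1 := by linarith
  have hinv : (0:ℝ) ≤ (β - 1)⁻¹ := inv_nonneg.2 hβ1.le
  cases N with
  | zero => simp only [range_zero, sum_empty]; linarith
  | succ N' =>
    rw [sum_range_succ']
    have h1 : ∑ i ∈ range N', (((i + 1) + 1 : ℕ) : ℝ) ^ (-β) ≤ (β - 1)⁻¹ := by
      have h := tail_sum hβ1 1 le_rfl N'
      have he : -((β - 1) + 1) = -β := by ring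
      simpa [he, Real.one_rpow] using h
    have h0 : (((0:ℕ) + 1 : ℕ) : ℝ) ^ (-β) = 1 := by norm_num
    rw [h0]
    linarith

private lemma abel_aux {E : Type*} [Ring E] (a s : ℕ → E) (n : ℕ) (M : ℕ) :
    ∑ i ∈ range (M + 1), a i * s (n - i) =
      (∑ k ∈ range (M + 1), a k) * s (n - M) +
        ∑ i ∈ range M, (∑ k ∈ range (i + 1), a k) * (s (n - i) - s (n - i - 1)) := by
  induction M with
  | zero => simp
  | succ M ih =>
    rw [sum_range_succ (fun i => a i * s (n - i)) (M + 1), ih,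
      sum_range_succ a (M + 1),
      sum_range_succ (fun i => (∑ k ∈ range (i + 1), a k) * (s (n - i) - s (n - i - 1))) M]
    have hs : n - (M + 1) = n - M - 1 := by omega
    rw [hs]
    rw [add_mul, mul_sub]
    abel

private lemma rpow_bound {c : ℝ} (hc : 0 ≤ c) {n a : ℕ} (ha : 1 ≤ a) (hn : 1 ≤ n)
    (h : n ≤ 4 * a) : (a : ℝ) ^ (-c) ≤ 4 ^ c * (n : ℝ) ^ (-c) := by
  have ha' : (0:ℝ) < a := by exact_mod_cast ha
  have hn' : (0:ℝ) < n := by exact_mod_cast hn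
  have h4 : (n : ℝ) ≤ 4 * a := by exact_mod_cast h
  have h' : (n : ℝ) / 4 ≤ a := by linarith
  calc (a : ℝ) ^ (-c) ≤ ((n : ℝ) / 4) ^ (-c) :=
        Real.rpow_le_rpow_of_nonpos (by positivity) h' (neg_nonpos.2 hc)
    _ = 4 ^ c * (n : ℝ) ^ (-c) := by
        rw [Real.div_rpow hn'.le (by norm_num : (0:ℝ) ≤ 4), div_eq_mul_inv,
          Real.rpow_neg (by norm_num : (0:ℝ) ≤ 4), inv_inv, mul_comm]
private noncomputable def phi (β : ℝ) (m : ℕ) : ℝ := ((max 1 m : ℕ) : ℝ) ^ (-β)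

private lemma phi_nonneg (β : ℝ) (m : ℕ) : 0 ≤ phi β m :=
  Real.rpow_nonneg (Nat.cast_nonneg _) _

private lemma phi_zero (β : ℝ) : phi β 0 = 1 := by
  simp [phi]

private lemma phi_eq (β : ℝ) {m : ℕ} (hm : 1 ≤ m) : phi β m = (m : ℝ) ^ (-β) := by
  rw [phi, max_eq_right hm]

private noncomputable def Psum (β : ℝ) (m : ℕ) : ℝ := ∑ i ∈ range m, phi β i

private lemma Psum_nonneg (β : ℝ) (m : ℕ) : 0 ≤ Psum β m :=
  sum_nonneg fun i _ => phi_nonneg β i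

private lemma Psum_mono (β : ℝ) {k m : ℕ} (h : k ≤ m) : Psum β k ≤ Psum β m :=
  sum_le_sum_of_subset_of_nonneg (range_subset_range.2 h) fun i _ _ => phi_nonneg β i

private lemma Psum_le_lt {β : ℝ} (hβ0 : 0 < β) (hβ1 : β < 1) {n : ℕ} (hn : 1 ≤ n) :
    Psum β n ≤ (1 + (1 - β)⁻¹) * (n : ℝ) ^ (1 - β) := by
  obtain ⟨n', rfl⟩ : ∃ n', n = n' + 1 := ⟨n - 1, by omega⟩
  rw [Psum, sum_range_succ', phi_zero]
  have he : ∀ i ∈ range n', phi β (i + 1) = ((i + 1 : ℕ) : ℝ) ^ (-β) := fun i _ =>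
    phi_eq _ (by omega)
  rw [sum_congr rfl he]
  have h1 := psum_lt hβ0 hβ1 n'
  have hγ : (0:ℝ) ≤ 1 - β := by linarith
  have hinv : (0:ℝ) ≤ (1 - β)⁻¹ := inv_nonneg.2 hγ
  have hmono : ((n' : ℕ) : ℝ) ^ (1 - β) ≤ ((n' + 1 : ℕ) : ℝ) ^ (1 - β) :=
    Real.rpow_le_rpow (Nat.cast_nonneg _) (by push_cast; linarith) hγ
  have hone : (1:ℝ) ≤ ((n' + 1 : ℕ) : ℝ) ^ (1 - β) := by
    calc (1:ℝ) = 1 ^ (1 - β) := (Real.one_rpow _).symm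
      _ ≤ ((n' + 1 : ℕ) : ℝ) ^ (1 - β) :=
        Real.rpow_le_rpow zero_le_one (by push_cast; linarith) hγ
  nlinarith [h1, hone, mul_le_mul_of_nonneg_left hmono hinv]

private lemma Psum_le_one {n : ℕ} (hn : 1 ≤ n) : Psum 1 n ≤ 2 + Real.log n := by
  obtain ⟨n', rfl⟩ : ∃ n', n = n' + 1 := ⟨n - 1, by omega⟩
  rw [Psum, sum_range_succ', phi_zero]
  have he : ∀ i ∈ range n', phi 1 (i + 1) = ((i + 1 : ℕ) : ℝ)⁻¹ := by
    intro i _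
    rw [phi_eq _ (by omega), Real.rpow_neg_one]
  rw [sum_congr rfl he]
  have h1 := psum_one n'
  have hmono : Real.log (n' : ℝ) ≤ Real.log ((n' + 1 : ℕ) : ℝ) := by
    rcases Nat.eq_zero_or_pos n' with rfl | h
    · simp
    · exact Real.log_le_log (by exact_mod_cast h) (by push_cast; linarith)
  push_cast at h1 hmono ⊢
  linarith

private lemma Psum_le_gt {β : ℝ} (hβ : 1 < β) (n : ℕ) : Psum β n ≤ 2 + (β - 1)⁻¹ := by
  have hinv : (0:ℝ) ≤ (β - 1)⁻¹ := inv_nonneg.2 (by linarith)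
  cases n with
  | zero => rw [Psum]; simp only [range_zero, sum_empty]; linarith
  | succ n' =>
    rw [Psum, sum_range_succ', phi_zero]
    have he : ∀ i ∈ range n', phi β (i + 1) = ((i + 1 : ℕ) : ℝ) ^ (-β) := fun i _ =>
      phi_eq _ (by omega)
    rw [sum_congr rfl he]
    have := psum_gt hβ n'
    linarith
/-- Lemma A.1: if `A(1) = B(1) = 0` and `‖A_n‖, ‖B_n‖ ≤ K n^{-(β+1)}`, then the
coefficients `C_n = ∑_{i+j ≤ n} A_i B_j` of `C(z) = (1-z)⁻¹ A(z) B(z)` satisfy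
`‖C_n‖ = O(n^{-2β})` for `β < 1`, `O((log n) n^{-2})` for `β = 1`, and
`O(n^{-(β+1)})` for `β > 1`. -/
theorem coefficient_bounds_product
    {E : Type*} [NormedRing E]
    (A B : ℕ → E) (hA : HasSum A 0) (hB : HasSum B 0)
    (β K : ℝ) (hβ : 0 < β) (hK : 0 < K)
    (hAbd : ∀ n : ℕ, 1 ≤ n → ‖A n‖ ≤ K * (n : ℝ) ^ (-(β + 1)))
    (hBbd : ∀ n : ℕ, 1 ≤ n → ‖B n‖ ≤ K * (n : ℝ) ^ (-(β + 1)))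
    (C : ℕ → E)
    (hC : ∀ n, C n = ∑ i ∈ Finset.range (n + 1), ∑ j ∈ Finset.range (n + 1 - i), A i * B j) :
    (β < 1 → (fun n : ℕ => ‖C n‖) =O[atTop] fun n : ℕ => (n : ℝ) ^ (-(2 * β))) ∧
    (β = 1 → (fun n : ℕ => ‖C n‖) =O[atTop] fun n : ℕ => Real.log n * (n : ℝ) ^ (-2 : ℝ)) ∧
    (1 < β → (fun n : ℕ => ‖C n‖) =O[atTop] fun n : ℕ => (n : ℝ) ^ (-(β + 1))) := by
  have hsA : Summable A := hA.summable
  have hsB : Summable B := hB.summable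
  have hKβ : 0 < K / β := div_pos hK hβ
  -- tail/partial-sum norm bound
  have tailnorm : ∀ f : ℕ → E, Summable f → (∑' i, f i) = 0 →
      (∀ k : ℕ, 1 ≤ k → ‖f k‖ ≤ K * (k : ℝ) ^ (-(β + 1))) →
      ∀ m : ℕ, 1 ≤ m → ‖∑ k ∈ range (m + 1), f k‖ ≤ K / β * (m : ℝ) ^ (-β) := by
    intro f hf hf0 hbd m hm
    have hshift : Summable fun j => f (j + (m + 1)) := (summable_nat_add_iff (m + 1)).2 hf
    have hid : ∑ k ∈ range (m + 1), f k = -∑' j, f (j + (m + 1)) := by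
      have h := Summable.sum_add_tsum_nat_add (m + 1) hf
      rw [hf0] at h
      exact eq_neg_of_add_eq_zero_left h
    rw [hid, norm_neg]
    have hbound : ∀ N : ℕ, ‖∑ j ∈ range N, f (j + (m + 1))‖ ≤ K / β * (m : ℝ) ^ (-β) := by
      intro N
      calc ‖∑ j ∈ range N, f (j + (m + 1))‖
          ≤ ∑ j ∈ range N, ‖f (j + (m + 1))‖ := norm_sum_le _ _
        _ ≤ ∑ j ∈ range N, K * ((j + m + 1 : ℕ) : ℝ) ^ (-(β + 1)) := by
            apply sum_le_sum
            intro j _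
            have h1 : 1 ≤ j + (m + 1) := by omega
            have h2 := hbd (j + (m + 1)) h1
            have h3 : j + (m + 1) = j + m + 1 := by omega
            rw [h3] at h2
            exact h2
        _ = K * ∑ j ∈ range N, ((j + m + 1 : ℕ) : ℝ) ^ (-(β + 1)) := by rw [mul_sum]
        _ ≤ K * (β⁻¹ * (m : ℝ) ^ (-β)) :=
            mul_le_mul_of_nonneg_left (tail_sum hβ m hm N) hK.le
        _ = K / β * (m : ℝ) ^ (-β) := by rw [div_eq_mul_inv]; ring
    exact le_of_tendsto' hshift.hasSum.tendsto_sum_nat.norm hbound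
  set c₁ : ℝ := K / β + ‖A 0‖ + ‖B 0‖ + 1 with hc₁def
  have hnA0 := norm_nonneg (A 0)
  have hnB0 := norm_nonneg (B 0)
  have hc₁ : 0 < c₁ := by rw [hc₁def]; linarith
  have hKc₁ : K / β ≤ c₁ := by rw [hc₁def]; linarith
  have hSA : ∀ m : ℕ, ‖∑ k ∈ range (m + 1), A k‖ ≤ c₁ * phi β m := by
    intro m
    rcases Nat.eq_zero_or_pos m with rfl | hm
    · rw [phi_zero, mul_one, sum_range_one]
      rw [hc₁def]; linarith
    · rw [phi_eq _ hm]
      calc ‖∑ k ∈ range (m + 1), A k‖ ≤ K / β * (m : ℝ) ^ (-β) :=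
            tailnorm A hsA hA.tsum_eq hAbd m hm
        _ ≤ c₁ * (m : ℝ) ^ (-β) :=
            mul_le_mul_of_nonneg_right hKc₁ (Real.rpow_nonneg (Nat.cast_nonneg m) _)
  have hSB : ∀ m : ℕ, ‖∑ k ∈ range (m + 1), B k‖ ≤ c₁ * phi β m := by
    intro m
    rcases Nat.eq_zero_or_pos m with rfl | hm
    · rw [phi_zero, mul_one, sum_range_one]
      rw [hc₁def]; linarith
    · rw [phi_eq _ hm]
      calc ‖∑ k ∈ range (m + 1), B k‖ ≤ K / β * (m : ℝ) ^ (-β) :=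
            tailnorm B hsB hB.tsum_eq hBbd m hm
        _ ≤ c₁ * (m : ℝ) ^ (-β) :=
            mul_le_mul_of_nonneg_right hKc₁ (Real.rpow_nonneg (Nat.cast_nonneg m) _)
  have h4β : (0:ℝ) < 4 ^ β := Real.rpow_pos_of_pos (by norm_num) _
  have h4β1 : (0:ℝ) < 4 ^ (β + 1) := Real.rpow_pos_of_pos (by norm_num) _
  set cM : ℝ := c₁ * 4 ^ β * (c₁ * 4 ^ β) + 2 * (c₁ * (K * 4 ^ (β + 1))) with hcMdef
  have hcM : 0 < cM := by
    rw [hcMdef]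
    have h1 : 0 < c₁ * 4 ^ β * (c₁ * 4 ^ β) := mul_pos (mul_pos hc₁ h4β) (mul_pos hc₁ h4β)
    have h2 : 0 < c₁ * (K * 4 ^ (β + 1)) := mul_pos hc₁ (mul_pos hK h4β1)
    linarith
  have master : ∀ n : ℕ, 2 ≤ n →
      ‖C n‖ ≤ cM * ((n : ℝ) ^ (-(2 * β)) + (n : ℝ) ^ (-(β + 1)) * Psum β n) := by
    intro n hn
    set M := n / 2 with hMdef
    have hM1 : 1 ≤ M := by omega
    have hMn : M + 1 ≤ n := by omega
    have hnM1 : 1 ≤ n - M := by omega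
    have h4M : n ≤ 4 * M := by omega
    have h4nM : n ≤ 4 * (n - M) := by omega
    have hn1 : 1 ≤ n := by omega
    have hnR : (0:ℝ) < n := by exact_mod_cast (by omega : 0 < n)
    have hCn : C n = (∑ k ∈ range (M + 1), A k) * (∑ j ∈ range ((n - M) + 1), B j)
        + ((∑ i ∈ range M, (∑ k ∈ range (i + 1), A k) * B (n - i))
        + ∑ k ∈ range (n - M), A (M + 1 + k) * (∑ j ∈ range ((n - (M + 1 + k)) + 1), B j)) := by
      rw [hC n]
      have e1 : ∀ i ∈ range (n + 1),
          (∑ j ∈ range (n + 1 - i), A i * B j)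
            = A i * ∑ j ∈ range ((n - i) + 1), B j := by
        intro i hi
        have hi' : i ≤ n := by have := mem_range.1 hi; omega
        have h : n + 1 - i = (n - i) + 1 := by omega
        rw [h, ← mul_sum]
      rw [sum_congr rfl e1]
      rw [← sum_range_add_sum_Ico (fun i => A i * ∑ j ∈ range ((n - i) + 1), B j)
        (show M + 1 ≤ n + 1 by omega)]
      rw [sum_Ico_eq_sum_range]
      have e2 : n + 1 - (M + 1) = n - M := by omega
      rw [e2]
      rw [abel_aux A (fun m => ∑ j ∈ range (m + 1), B j) n M]
      have e3 : ∀ i ∈ range M,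
          (∑ k ∈ range (i + 1), A k) *
            ((∑ j ∈ range ((n - i) + 1), B j) - ∑ j ∈ range ((n - i - 1) + 1), B j)
          = (∑ k ∈ range (i + 1), A k) * B (n - i) := by
        intro i hi
        have hi' : i < M := mem_range.1 hi
        have h1 : (n - i - 1) + 1 = n - i := by omega
        have h2 : (n - i) + 1 = ((n - i - 1) + 1) + 1 := by omega
        rw [h2, sum_range_succ (fun j => B j) ((n - i - 1) + 1), h1, add_sub_cancel_left]
      rw [sum_congr rfl e3]
      abel
    have hφM : phi β M ≤ 4 ^ β * (n : ℝ) ^ (-β) := by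
      rw [phi_eq _ hM1]; exact rpow_bound hβ.le hM1 hn1 h4M
    have hφnM : phi β (n - M) ≤ 4 ^ β * (n : ℝ) ^ (-β) := by
      rw [phi_eq _ hnM1]; exact rpow_bound hβ.le hnM1 hn1 h4nM
    have hnn : (0:ℝ) ≤ (n:ℝ) ^ (-β) := Real.rpow_nonneg hnR.le _
    have hnn1 : (0:ℝ) ≤ (n:ℝ) ^ (-(β + 1)) := Real.rpow_nonneg hnR.le _
    have hb1 : ‖(∑ k ∈ range (M + 1), A k) * ∑ j ∈ range ((n - M) + 1), B j‖
        ≤ c₁ * 4 ^ β * (c₁ * 4 ^ β) * (n : ℝ) ^ (-(2 * β)) := by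
      calc ‖(∑ k ∈ range (M + 1), A k) * ∑ j ∈ range ((n - M) + 1), B j‖
          ≤ ‖∑ k ∈ range (M + 1), A k‖ * ‖∑ j ∈ range ((n - M) + 1), B j‖ := norm_mul_le _ _
        _ ≤ (c₁ * phi β M) * (c₁ * phi β (n - M)) :=
            mul_le_mul (hSA M) (hSB (n - M)) (norm_nonneg _)
              (mul_nonneg hc₁.le (phi_nonneg _ _))
        _ ≤ (c₁ * (4 ^ β * (n : ℝ) ^ (-β))) * (c₁ * (4 ^ β * (n : ℝ) ^ (-β))) := by
            apply mul_le_mul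
            · exact mul_le_mul_of_nonneg_left hφM hc₁.le
            · exact mul_le_mul_of_nonneg_left hφnM hc₁.le
            · exact mul_nonneg hc₁.le (phi_nonneg _ _)
            · exact mul_nonneg hc₁.le (mul_nonneg h4β.le hnn)
        _ = c₁ * 4 ^ β * (c₁ * 4 ^ β) * ((n : ℝ) ^ (-β) * (n : ℝ) ^ (-β)) := by ring
        _ = c₁ * 4 ^ β * (c₁ * 4 ^ β) * (n : ℝ) ^ (-(2 * β)) := by
            rw [← Real.rpow_add hnR, show -β + -β = -(2 * β) by ring]
    have hb2 : ‖∑ i ∈ range M, (∑ k ∈ range (i + 1), A k) * B (n - i)‖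
        ≤ c₁ * (K * 4 ^ (β + 1)) * ((n : ℝ) ^ (-(β + 1)) * Psum β n) := by
      have hterm : ∀ i ∈ range M, ‖(∑ k ∈ range (i + 1), A k) * B (n - i)‖
          ≤ c₁ * (K * 4 ^ (β + 1)) * (n : ℝ) ^ (-(β + 1)) * phi β i := by
        intro i hi
        have hi' : i < M := mem_range.1 hi
        have hni : 1 ≤ n - i := by omega
        have h4i : n ≤ 4 * (n - i) := by omega
        calc ‖(∑ k ∈ range (i + 1), A k) * B (n - i)‖
            ≤ ‖∑ k ∈ range (i + 1), A k‖ * ‖B (n - i)‖ := norm_mul_le _ _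
          _ ≤ (c₁ * phi β i) * (K * (4 ^ (β + 1) * (n : ℝ) ^ (-(β + 1)))) := by
              apply mul_le_mul (hSA i) _ (norm_nonneg _) (mul_nonneg hc₁.le (phi_nonneg _ _))
              calc ‖B (n - i)‖ ≤ K * ((n - i : ℕ) : ℝ) ^ (-(β + 1)) := hBbd _ hni
                _ ≤ K * (4 ^ (β + 1) * (n : ℝ) ^ (-(β + 1))) :=
                    mul_le_mul_of_nonneg_left (rpow_bound (by linarith) hni hn1 h4i) hK.le
          _ = c₁ * (K * 4 ^ (β + 1)) * (n : ℝ) ^ (-(β + 1)) * phi β i := by ring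
      calc ‖∑ i ∈ range M, (∑ k ∈ range (i + 1), A k) * B (n - i)‖
          ≤ ∑ i ∈ range M, ‖(∑ k ∈ range (i + 1), A k) * B (n - i)‖ := norm_sum_le _ _
        _ ≤ ∑ i ∈ range M, c₁ * (K * 4 ^ (β + 1)) * (n : ℝ) ^ (-(β + 1)) * phi β i :=
            sum_le_sum hterm
        _ = c₁ * (K * 4 ^ (β + 1)) * (n : ℝ) ^ (-(β + 1)) * Psum β M := by
            rw [← mul_sum]; rfl
        _ ≤ c₁ * (K * 4 ^ (β + 1)) * ((n : ℝ) ^ (-(β + 1)) * Psum β n) := by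
            rw [mul_assoc]
            exact mul_le_mul_of_nonneg_left
              (mul_le_mul_of_nonneg_left (Psum_mono β (show M ≤ n by omega)) hnn1)
              (mul_nonneg hc₁.le (mul_nonneg hK.le h4β1.le))
    have hb3 : ‖∑ k ∈ range (n - M), A (M + 1 + k) * ∑ j ∈ range ((n - (M + 1 + k)) + 1), B j‖
        ≤ c₁ * (K * 4 ^ (β + 1)) * ((n : ℝ) ^ (-(β + 1)) * Psum β n) := by
      have hterm : ∀ k ∈ range (n - M),
          ‖A (M + 1 + k) * ∑ j ∈ range ((n - (M + 1 + k)) + 1), B j‖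
          ≤ c₁ * (K * 4 ^ (β + 1)) * (n : ℝ) ^ (-(β + 1)) * phi β ((n - M) - 1 - k) := by
        intro k hk
        have hk' : k < n - M := mem_range.1 hk
        have h1 : 1 ≤ M + 1 + k := by omega
        have h4k : n ≤ 4 * (M + 1 + k) := by omega
        have hidx : n - (M + 1 + k) = (n - M) - 1 - k := by omega
        calc ‖A (M + 1 + k) * ∑ j ∈ range ((n - (M + 1 + k)) + 1), B j‖
            ≤ ‖A (M + 1 + k)‖ * ‖∑ j ∈ range ((n - (M + 1 + k)) + 1), B j‖ := norm_mul_le _ _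
          _ ≤ (K * (4 ^ (β + 1) * (n : ℝ) ^ (-(β + 1)))) * (c₁ * phi β (n - (M + 1 + k))) := by
              apply mul_le_mul _ (hSB _) (norm_nonneg _)
                (mul_nonneg hK.le (mul_nonneg h4β1.le hnn1))
              calc ‖A (M + 1 + k)‖ ≤ K * ((M + 1 + k : ℕ) : ℝ) ^ (-(β + 1)) := hAbd _ h1
                _ ≤ K * (4 ^ (β + 1) * (n : ℝ) ^ (-(β + 1))) :=
                    mul_le_mul_of_nonneg_left (rpow_bound (by linarith) h1 hn1 h4k) hK.le
          _ = c₁ * (K * 4 ^ (β + 1)) * (n : ℝ) ^ (-(β + 1)) * phi β ((n - M) - 1 - k) := by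
              rw [hidx]; ring
      calc ‖∑ k ∈ range (n - M), A (M + 1 + k) * ∑ j ∈ range ((n - (M + 1 + k)) + 1), B j‖
          ≤ ∑ k ∈ range (n - M), ‖A (M + 1 + k) * ∑ j ∈ range ((n - (M + 1 + k)) + 1), B j‖ :=
            norm_sum_le _ _
        _ ≤ ∑ k ∈ range (n - M),
              c₁ * (K * 4 ^ (β + 1)) * (n : ℝ) ^ (-(β + 1)) * phi β ((n - M) - 1 - k) :=
            sum_le_sum hterm
        _ = c₁ * (K * 4 ^ (β + 1)) * (n : ℝ) ^ (-(β + 1)) * Psum β (n - M) := by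
            rw [← mul_sum, sum_range_reflect (fun k => phi β k) (n - M)]; rfl
        _ ≤ c₁ * (K * 4 ^ (β + 1)) * ((n : ℝ) ^ (-(β + 1)) * Psum β n) := by
            rw [mul_assoc]
            exact mul_le_mul_of_nonneg_left
              (mul_le_mul_of_nonneg_left (Psum_mono β (show n - M ≤ n by omega)) hnn1)
              (mul_nonneg hc₁.le (mul_nonneg hK.le h4β1.le))
    calc ‖C n‖ ≤ c₁ * 4 ^ β * (c₁ * 4 ^ β) * (n : ℝ) ^ (-(2 * β))
          + (c₁ * (K * 4 ^ (β + 1)) * ((n : ℝ) ^ (-(β + 1)) * Psum β n)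
          + c₁ * (K * 4 ^ (β + 1)) * ((n : ℝ) ^ (-(β + 1)) * Psum β n)) := by
          rw [hCn]
          refine (norm_add_le _ _).trans
            (add_le_add hb1 ((norm_add_le _ _).trans (add_le_add hb2 hb3)))
      _ ≤ cM * ((n : ℝ) ^ (-(2 * β)) + (n : ℝ) ^ (-(β + 1)) * Psum β n) := by
          rw [hcMdef]
          have h1 : (0:ℝ) ≤ (n : ℝ) ^ (-(2 * β)) := Real.rpow_nonneg hnR.le _
          have h2 : (0:ℝ) ≤ (n : ℝ) ^ (-(β + 1)) * Psum β n :=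
            mul_nonneg hnn1 (Psum_nonneg β n)
          have h3 : (0:ℝ) ≤ c₁ * 4 ^ β * (c₁ * 4 ^ β) :=
            mul_nonneg (mul_nonneg hc₁.le h4β.le) (mul_nonneg hc₁.le h4β.le)
          have h4 : (0:ℝ) ≤ c₁ * (K * 4 ^ (β + 1)) :=
            mul_nonneg hc₁.le (mul_nonneg hK.le h4β1.le)
          nlinarith [mul_nonneg h3 h2, mul_nonneg h4 h1]
  refine ⟨?_, ?_, ?_⟩
  · -- β < 1
    intro hβ1
    rw [isBigO_iff]
    refine ⟨cM * (1 + (1 + (1 - β)⁻¹)), ?_⟩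
    filter_upwards [eventually_ge_atTop 2] with n hn
    have hn1 : (1:ℕ) ≤ n := by omega
    have hnR : (0:ℝ) < n := by exact_mod_cast (by omega : 0 < n)
    have hm := master n hn
    have hP := Psum_le_lt hβ hβ1 hn1
    rw [norm_norm, Real.norm_of_nonneg (Real.rpow_nonneg hnR.le _)]
    have hkey : (n:ℝ) ^ (-(β + 1)) * Psum β n ≤ (1 + (1 - β)⁻¹) * (n : ℝ) ^ (-(2 * β)) := by
      calc (n:ℝ) ^ (-(β + 1)) * Psum β n
          ≤ (n:ℝ) ^ (-(β + 1)) * ((1 + (1 - β)⁻¹) * (n : ℝ) ^ (1 - β)) :=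
            mul_le_mul_of_nonneg_left hP (Real.rpow_nonneg hnR.le _)
        _ = (1 + (1 - β)⁻¹) * ((n:ℝ) ^ (-(β + 1)) * (n : ℝ) ^ (1 - β)) := by ring
        _ = (1 + (1 - β)⁻¹) * (n : ℝ) ^ (-(2 * β)) := by
            rw [← Real.rpow_add hnR, show -(β + 1) + (1 - β) = -(2 * β) by ring]
    calc ‖C n‖ ≤ cM * ((n : ℝ) ^ (-(2 * β)) + (n : ℝ) ^ (-(β + 1)) * Psum β n) := hm
      _ ≤ cM * ((n : ℝ) ^ (-(2 * β)) + (1 + (1 - β)⁻¹) * (n : ℝ) ^ (-(2 * β))) :=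
          mul_le_mul_of_nonneg_left (by linarith) hcM.le
      _ = cM * (1 + (1 + (1 - β)⁻¹)) * (n : ℝ) ^ (-(2 * β)) := by ring
  · -- β = 1
    intro hβeq
    subst hβeq
    rw [isBigO_iff]
    refine ⟨cM * 4, ?_⟩
    filter_upwards [eventually_ge_atTop 21] with n hn
    have hn2 : 2 ≤ n := by omega
    have hn1 : (1:ℕ) ≤ n := by omega
    have hnR : (0:ℝ) < n := by exact_mod_cast (by omega : 0 < n)
    have hm := master n hn2
    have hP := Psum_le_one hn1
    have hlog3 : (3:ℝ) ≤ Real.log n := by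
      rw [Real.le_log_iff_exp_le hnR]
      have h1 : Real.exp 1 ≤ 2.7182818286 := Real.exp_one_lt_d9.le
      have h3 : Real.exp 3 = Real.exp 1 ^ (3:ℕ) := by
        rw [← Real.exp_nat_mul]; norm_num
      have h21 : Real.exp 3 ≤ 21 := by
        rw [h3]
        calc Real.exp 1 ^ (3:ℕ) ≤ 2.7182818286 ^ (3:ℕ) :=
              pow_le_pow_left₀ (Real.exp_nonneg 1) h1 3
          _ ≤ 21 := by norm_num
      calc Real.exp 3 ≤ 21 := h21
        _ ≤ n := by exact_mod_cast hn
    rw [show (-(2 * (1:ℝ))) = (-2:ℝ) by norm_num, show (-((1:ℝ) + 1)) = (-2:ℝ) by norm_num] at hm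
    have hx : (0:ℝ) ≤ (n:ℝ) ^ (-2:ℝ) := Real.rpow_nonneg hnR.le _
    rw [norm_norm, Real.norm_of_nonneg (mul_nonneg (by linarith : (0:ℝ) ≤ Real.log n) hx)]
    calc ‖C n‖ ≤ cM * ((n:ℝ) ^ (-2:ℝ) + (n:ℝ) ^ (-2:ℝ) * Psum 1 n) := hm
      _ ≤ cM * ((n:ℝ) ^ (-2:ℝ) + (n:ℝ) ^ (-2:ℝ) * (2 + Real.log n)) := by
          apply mul_le_mul_of_nonneg_left _ hcM.le
          have := mul_le_mul_of_nonneg_left hP hx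
          linarith
      _ = cM * ((3 + Real.log n) * (n:ℝ) ^ (-2:ℝ)) := by ring
      _ ≤ cM * (4 * Real.log n * (n:ℝ) ^ (-2:ℝ)) := by
          apply mul_le_mul_of_nonneg_left _ hcM.le
          apply mul_le_mul_of_nonneg_right _ hx
          linarith
      _ = cM * 4 * (Real.log n * (n:ℝ) ^ (-2:ℝ)) := by ring
  · -- β > 1
    intro hβ1
    rw [isBigO_iff]
    refine ⟨cM * (1 + (2 + (β - 1)⁻¹)), ?_⟩
    filter_upwards [eventually_ge_atTop 2] with n hn
    have hn1R : (1:ℝ) ≤ n := by exact_mod_cast (by omega : 1 ≤ n)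
    have hnR : (0:ℝ) < n := by linarith
    have hm := master n hn
    have hP := Psum_le_gt hβ1 n
    rw [norm_norm, Real.norm_of_nonneg (Real.rpow_nonneg hnR.le _)]
    have hexp : (n:ℝ) ^ (-(2 * β)) ≤ (n:ℝ) ^ (-(β + 1)) :=
      Real.rpow_le_rpow_of_exponent_le hn1R (by linarith)
    have hx : (0:ℝ) ≤ (n:ℝ) ^ (-(β + 1)) := Real.rpow_nonneg hnR.le _
    have hinv : (0:ℝ) ≤ (β - 1)⁻¹ := inv_nonneg.2 (by linarith)
    calc ‖C n‖ ≤ cM * ((n : ℝ) ^ (-(2 * β)) + (n : ℝ) ^ (-(β + 1)) * Psum β n) := hm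
      _ ≤ cM * ((n : ℝ) ^ (-(β + 1)) + (n : ℝ) ^ (-(β + 1)) * (2 + (β - 1)⁻¹)) := by
          apply mul_le_mul_of_nonneg_left _ hcM.le
          have h2 := mul_le_mul_of_nonneg_left hP hx
          linarith
      _ = cM * (1 + (2 + (β - 1)⁻¹)) * (n : ℝ) ^ (-(β + 1)) := by ring
end

section
/- Let a_n ≥ 0 with a_n = O(n^{-(β+1)}) for β > 0, and b_n ≥ 0 with b_n = o(∑_{j>n} g_j) where g_n ≥ 0 and ∑_{j>n} g_j is regularly varying of index -β (e.g., ∑_{j>n} g_j ~ C n^{-β}). Then the convolution c_n = ∑_{j=0}^n a_j b_{n-j} satisfies c_n = o(∑_{j>n} g_j). -/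
open Filter Asymptotics Topology

set_option maxHeartbeats 2000000

/-- Convolution preserves little-o against regularly varying tails: if
`a_n = O(n^{-(β+1)})`, `b_n = o(G_n)` where `G_n = ∑_{j>n} g_j ~ C n^{-β}`, then
`c_n = ∑_{j=0}^n a_j b_{n-j} = o(G_n)`. -/
theorem convolution_little_o_tail
    (a b g : ℕ → ℝ) (ha0 : ∀ n, 0 ≤ a n) (hb0 : ∀ n, 0 ≤ b n) (hg0 : ∀ n, 0 ≤ g n)
    (β C : ℝ) (hβ : 0 < β) (hC : 0 < C)
    (haO : a =O[atTop] fun n : ℕ => (n : ℝ) ^ (-(β + 1)))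
    (G : ℕ → ℝ) (hG : ∀ n, G n = ∑' j : ℕ, if n < j then g j else 0)
    (hbo : b =o[atTop] G)
    (hreg : G ~[atTop] fun n : ℕ => C * (n : ℝ) ^ (-β))
    (c : ℕ → ℝ) (hc : ∀ n, c n = ∑ j ∈ Finset.range (n + 1), a j * b (n - j)) :
    c =o[atTop] G := by
  have hG0 : ∀ n, 0 ≤ G n := by
    intro n; rw [hG]
    refine tsum_nonneg fun j => ?_
    split <;> [exact hg0 j; exact le_rfl]
  have hc0 : ∀ n, 0 ≤ c n := by
    intro n; rw [hc]
    exact Finset.sum_nonneg fun j _ => mul_nonneg (ha0 j) (hb0 _)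
  -- summability of a
  have hsp : Summable (fun n : ℕ => (n : ℝ) ^ (-(β + 1))) :=
    Real.summable_nat_rpow.2 (by linarith)
  have hsa : Summable a := summable_of_isBigO_nat' hsp haO
  set A := ∑' n, a n with hAdef
  have hA0 : 0 ≤ A := tsum_nonneg ha0
  have hAle : ∀ m : ℕ, ∑ j ∈ Finset.range m, a j ≤ A := fun m =>
    Summable.sum_le_tsum (Finset.range m) (fun i _ => ha0 i) hsa
  -- bound on a
  obtain ⟨K₀, hK₀⟩ := isBigO_iff.1 haO
  set K := max K₀ 0 with hKdef
  have hK0 : 0 ≤ K := le_max_right _ _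
  have hKa : ∀ᶠ n : ℕ in atTop, a n ≤ K * (n : ℝ) ^ (-(β + 1)) := by
    filter_upwards [hK₀] with n hn
    have h1 : 0 ≤ (n : ℝ) ^ (-(β + 1)) := Real.rpow_nonneg (Nat.cast_nonneg n) _
    rw [Real.norm_of_nonneg (ha0 n), Real.norm_of_nonneg h1] at hn
    exact hn.trans (mul_le_mul_of_nonneg_right (le_max_left _ _) h1)
  obtain ⟨NK, hNK⟩ := eventually_atTop.1 hKa
  -- lower comparison : C n^{-β} ≤ M₁ G n
  obtain ⟨M₀, hM₀⟩ := isBigO_iff.1 hreg.symm.isBigO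
  set M₁ := max M₀ 1 with hM1def
  have hM10 : (0:ℝ) < M₁ := lt_of_lt_of_le one_pos (le_max_right _ _)
  have hM1 : ∀ᶠ n : ℕ in atTop, C * (n : ℝ) ^ (-β) ≤ M₁ * G n := by
    filter_upwards [hM₀] with n hn
    have h1 : 0 ≤ C * (n : ℝ) ^ (-β) :=
      mul_nonneg hC.le (Real.rpow_nonneg (Nat.cast_nonneg n) _)
    rw [Real.norm_of_nonneg h1, Real.norm_of_nonneg (hG0 n)] at hn
    exact hn.trans (mul_le_mul_of_nonneg_right (le_max_left _ _) (hG0 n))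
  obtain ⟨N1, hN1⟩ := eventually_atTop.1 hM1
  -- upper comparison : G n ≤ M₂ n^{-β}
  obtain ⟨M₀', hM₀'⟩ := isBigO_iff.1 hreg.isBigO
  set M₂ := max M₀' 0 * C with hM2def
  have hM20 : 0 ≤ M₂ := mul_nonneg (le_max_right _ _) hC.le
  have hM2 : ∀ᶠ n : ℕ in atTop, G n ≤ M₂ * (n : ℝ) ^ (-β) := by
    filter_upwards [hM₀'] with n hn
    have h1 : 0 ≤ C * (n : ℝ) ^ (-β) :=
      mul_nonneg hC.le (Real.rpow_nonneg (Nat.cast_nonneg n) _)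
    rw [Real.norm_of_nonneg (hG0 n), Real.norm_of_nonneg h1] at hn
    calc G n ≤ M₀' * (C * (n : ℝ) ^ (-β)) := hn
      _ ≤ max M₀' 0 * (C * (n : ℝ) ^ (-β)) := mul_le_mul_of_nonneg_right (le_max_left _ _) h1
      _ = M₂ * (n : ℝ) ^ (-β) := by rw [hM2def]; ring
  obtain ⟨N2, hN2⟩ := eventually_atTop.1 hM2
  -- b tends to 0, Cesàro
  have hGten : Tendsto G atTop (𝓝 0) := by
    have h1 : Tendsto (fun n : ℕ => C * (n : ℝ) ^ (-β)) atTop (𝓝 0) := by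
      have h2 : Tendsto (fun n : ℕ => (n : ℝ) ^ (-β)) atTop (𝓝 0) :=
        (tendsto_rpow_neg_atTop hβ).comp tendsto_natCast_atTop_atTop
      simpa using h2.const_mul C
    exact hreg.symm.tendsto_nhds h1
  have hbten : Tendsto b atTop (𝓝 0) := hbo.trans_tendsto hGten
  have hces : Tendsto (fun n : ℕ => ((n : ℝ)⁻¹) * ∑ i ∈ Finset.range n, b i) atTop (𝓝 0) :=
    hbten.cesaro
  -- the little-o statement
  rw [isLittleO_iff]
  intro ε hε
  set P := (2 : ℝ) ^ β with hPdef
  have hP : (0:ℝ) < P := Real.rpow_pos_of_pos two_pos _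
  set M₃ := M₂ * P * M₁ / C with hM3def
  have hM30 : 0 ≤ M₃ := by positivity
  set δ := ε / (2 * (M₃ * A + 1)) with hδdef
  have hδ : 0 < δ := by positivity
  set η := ε * C / (8 * (K + 1) * P * M₁) with hηdef
  have hη : 0 < η := by positivity
  obtain ⟨Nb, hNb⟩ := eventually_atTop.1 (isLittleO_iff.mp hbo hδ)
  obtain ⟨Nc, hNc⟩ := eventually_atTop.1 (hces.eventually_lt_const hη)
  set N : ℕ := max (max (2*Nb+2) (2*NK+2)) (max (max N1 (2*N2+2)) (max Nc 4)) with hNdef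
  filter_upwards [eventually_ge_atTop N] with n hn
  rw [hNdef] at hn
  have hn4 : 4 ≤ n := by omega
  have hnb : 2*Nb+2 ≤ n := by omega
  have hnk : 2*NK+2 ≤ n := by omega
  have hn1 : N1 ≤ n := by omega
  have hn2 : 2*N2+2 ≤ n := by omega
  have hnc : Nc ≤ n := by omega
  have hn0 : (0:ℝ) < (n:ℝ) := by positivity
  have hn0 : (0:ℝ) < (n:ℝ) := by exact_mod_cast (by omega : 0 < n)
  set m := n / 2 with hmdef
  have hm1n : m + 1 ≤ n + 1 := by omega
  have hsplit : c n = (∑ j ∈ Finset.Ico 0 (m+1), a j * b (n-j))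
      + ∑ j ∈ Finset.Ico (m+1) (n+1), a j * b (n-j) := by
    rw [hc, Finset.range_eq_Ico, ← Finset.sum_Ico_consecutive _ (Nat.zero_le _) hm1n]
  have hGnb : (n:ℝ) ^ (-β) ≤ M₁ / C * G n := by
    have h := hN1 n hn1
    rw [div_mul_eq_mul_div, le_div_iff₀ hC]
    linarith
  -- first block
  have hb1 : ∀ j ∈ Finset.Ico 0 (m+1), a j * b (n - j) ≤ a j * (δ * (M₃ * G n)) := by
    intro j hj
    rw [Finset.mem_Ico] at hj
    have hjm : j ≤ m := by omega
    have hcast : (n:ℝ)/2 ≤ ((n - j : ℕ) : ℝ) := by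
      have h2 : (n:ℝ) ≤ 2 * ((n - j : ℕ):ℝ) := by exact_mod_cast (by omega : n ≤ 2 * (n - j))
      linarith
    have hb' : b (n - j) ≤ δ * G (n - j) := by
      have h := hNb (n - j) (by omega)
      rwa [Real.norm_of_nonneg (hb0 _), Real.norm_of_nonneg (hG0 _)] at h
    have hG' : G (n - j) ≤ M₂ * ((n - j : ℕ):ℝ) ^ (-β) := hN2 _ (by omega)
    have hpow : ((n - j:ℕ):ℝ) ^ (-β) ≤ P * (n:ℝ) ^ (-β) := by
      have h1 : ((n - j:ℕ):ℝ) ^ (-β) ≤ ((n:ℝ)/2) ^ (-β) :=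
        Real.rpow_le_rpow_of_nonpos (by linarith) hcast (by linarith)
      have h2 : ((n:ℝ)/2) ^ (-β) = P * (n:ℝ) ^ (-β) := by
        rw [Real.div_rpow (le_of_lt hn0) (by norm_num : (0:ℝ) ≤ 2),
          Real.rpow_neg (by norm_num : (0:ℝ) ≤ 2), div_eq_mul_inv, inv_inv, hPdef]
        ring
      linarith
    have hfin : b (n - j) ≤ δ * (M₃ * G n) := by
      have c1 : b (n-j) ≤ δ * (M₂ * ((n-j:ℕ):ℝ) ^ (-β)) :=
        hb'.trans (mul_le_mul_of_nonneg_left hG' hδ.le)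
      have c2 : M₂ * ((n-j:ℕ):ℝ) ^ (-β) ≤ M₂ * (P * (n:ℝ)^(-β)) :=
        mul_le_mul_of_nonneg_left hpow hM20
      have c3 : M₂ * (P * (n:ℝ)^(-β)) ≤ M₂ * (P * (M₁/C * G n)) :=
        mul_le_mul_of_nonneg_left (mul_le_mul_of_nonneg_left hGnb hP.le) hM20
      have c4 : M₂ * (P * (M₁/C * G n)) = M₃ * G n := by rw [hM3def]; ring
      calc b (n-j) ≤ δ * (M₂ * ((n-j:ℕ):ℝ) ^ (-β)) := c1
        _ ≤ δ * (M₂ * (P * (M₁/C * G n))) :=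
            mul_le_mul_of_nonneg_left (c2.trans c3) hδ.le
        _ = δ * (M₃ * G n) := by rw [c4]
    exact mul_le_mul_of_nonneg_left hfin (ha0 j)
  have hS1 : ∑ j ∈ Finset.Ico 0 (m+1), a j * b (n-j) ≤ ε/2 * G n := by
    have h1 : ∑ j ∈ Finset.Ico 0 (m+1), a j * b (n-j)
        ≤ ∑ j ∈ Finset.Ico 0 (m+1), a j * (δ * (M₃ * G n)) := Finset.sum_le_sum hb1
    have h2 : ∑ j ∈ Finset.Ico 0 (m+1), a j * (δ * (M₃ * G n))
        = (∑ j ∈ Finset.range (m+1), a j) * (δ * (M₃ * G n)) := by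
      rw [Finset.range_eq_Ico, Finset.sum_mul]
    have h3 : (∑ j ∈ Finset.range (m+1), a j) * (δ * (M₃ * G n)) ≤ A * (δ * (M₃ * G n)) :=
      mul_le_mul_of_nonneg_right (hAle _) (mul_nonneg hδ.le (mul_nonneg hM30 (hG0 n)))
    have hδeq : δ * (M₃ * A + 1) = ε / 2 := by
      rw [hδdef]; field_simp
    have key : A * (δ * M₃) ≤ ε / 2 := by nlinarith [hδ.le, hM30, hA0]
    calc ∑ j ∈ Finset.Ico 0 (m+1), a j * b (n-j) ≤ A * (δ * (M₃ * G n)) := by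
          rw [h2] at h1; exact h1.trans h3
      _ = (A * (δ * M₃)) * G n := by ring
      _ ≤ ε/2 * G n := mul_le_mul_of_nonneg_right key (hG0 n)
  -- second block
  have hb2 : ∀ j ∈ Finset.Ico (m+1) (n+1), a j * b (n-j)
      ≤ (K * (2 * P * (n:ℝ) ^ (-(β+1)))) * b (n-j) := by
    intro j hj
    rw [Finset.mem_Ico] at hj
    have hja : a j ≤ K * (j:ℝ) ^ (-(β+1)) := hNK j (by omega)
    have hcast : (n:ℝ)/2 ≤ (j:ℝ) := by
      have h2 : (n:ℝ) ≤ 2*(j:ℝ) := by exact_mod_cast (by omega : n ≤ 2*j)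
      linarith
    have hpow : (j:ℝ) ^ (-(β+1)) ≤ 2 * P * (n:ℝ) ^ (-(β+1)) := by
      have h1 : (j:ℝ) ^ (-(β+1)) ≤ ((n:ℝ)/2) ^ (-(β+1)) :=
        Real.rpow_le_rpow_of_nonpos (by linarith) hcast (by linarith)
      have h2 : ((n:ℝ)/2) ^ (-(β+1)) = (2:ℝ)^(β+1) * (n:ℝ) ^ (-(β+1)) := by
        rw [Real.div_rpow hn0.le (by norm_num : (0:ℝ) ≤ 2),
          Real.rpow_neg (by norm_num : (0:ℝ) ≤ 2), div_eq_mul_inv, inv_inv]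
        ring
      have h3 : (2:ℝ)^(β+1) = 2 * P := by
        rw [hPdef, Real.rpow_add two_pos, Real.rpow_one]; ring
      rw [h2, h3] at h1; exact h1
    calc a j * b (n-j) ≤ (K * (j:ℝ)^(-(β+1))) * b (n-j) :=
          mul_le_mul_of_nonneg_right hja (hb0 _)
      _ ≤ (K * (2 * P * (n:ℝ)^(-(β+1)))) * b (n-j) :=
          mul_le_mul_of_nonneg_right (mul_le_mul_of_nonneg_left hpow hK0) (hb0 _)
  have hsumb : ∑ j ∈ Finset.Ico (m+1) (n+1), b (n-j) ≤ η * ((n:ℝ)+1) := by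
    have h1 : ∑ j ∈ Finset.Ico (m+1) (n+1), b (n-j) ≤ ∑ j ∈ Finset.range (n+1), b (n-j) := by
      rw [Finset.range_eq_Ico]
      exact Finset.sum_le_sum_of_subset_of_nonneg
        (Finset.Ico_subset_Ico (Nat.zero_le _) le_rfl) (fun i _ _ => hb0 _)
    have h2 : ∑ j ∈ Finset.range (n+1), b (n-j) = ∑ k ∈ Finset.range (n+1), b k := by
      simpa using Finset.sum_range_reflect b (n+1)
    have h3 : ∑ k ∈ Finset.range (n+1), b k ≤ η * ((n:ℝ)+1) := by
      have h := hNc (n+1) (by omega)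
      have hpos : (0:ℝ) < ((n+1:ℕ):ℝ) := by positivity
      rw [inv_mul_lt_iff₀ hpos] at h
      push_cast at h
      linarith
    linarith [h1, h2.le, h2.ge]
  have hS2 : ∑ j ∈ Finset.Ico (m+1) (n+1), a j * b (n-j) ≤ ε/2 * G n := by
    have h1 : ∑ j ∈ Finset.Ico (m+1) (n+1), a j * b (n-j)
        ≤ (K * (2 * P * (n:ℝ)^(-(β+1)))) * ∑ j ∈ Finset.Ico (m+1) (n+1), b (n-j) := by
      rw [Finset.mul_sum]; exact Finset.sum_le_sum hb2
    have hfac : 0 ≤ K * (2 * P * (n:ℝ)^(-(β+1))) := by positivity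
    have h2 := mul_le_mul_of_nonneg_left hsumb hfac
    have hnpow : (n:ℝ)^(-(β+1)) * (n:ℝ) = (n:ℝ)^(-β) := by
      rw [← Real.rpow_add_one hn0.ne' (-(β+1)), show -(β+1)+1 = -β by ring]
    have hkey : (n:ℝ)^(-(β+1)) * ((n:ℝ)+1) ≤ 2 * (n:ℝ)^(-β) := by
      have hle : (n:ℝ)+1 ≤ 2*(n:ℝ) := by
        have : (1:ℝ) ≤ (n:ℝ) := by exact_mod_cast (by omega : 1 ≤ n)
        linarith
      have hp0 : 0 ≤ (n:ℝ)^(-(β+1)) := Real.rpow_nonneg hn0.le _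
      calc (n:ℝ)^(-(β+1)) * ((n:ℝ)+1) ≤ (n:ℝ)^(-(β+1)) * (2*(n:ℝ)) :=
            mul_le_mul_of_nonneg_left hle hp0
        _ = 2 * ((n:ℝ)^(-(β+1)) * (n:ℝ)) := by ring
        _ = 2 * (n:ℝ)^(-β) := by rw [hnpow]
    have h4 : (K * 2 * P * η) * ((n:ℝ)^(-(β+1)) * ((n:ℝ)+1))
        ≤ (K * 2 * P * η) * (2 * (n:ℝ)^(-β)) :=
      mul_le_mul_of_nonneg_left hkey (by positivity)
    have h5 : (K * 2 * P * η) * (2 * (n:ℝ)^(-β)) ≤ (K * 2 * P * η) * (2 * (M₁/C * G n)) := by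
      have h6 := mul_le_mul_of_nonneg_left hGnb (by norm_num : (0:ℝ) ≤ 2)
      exact mul_le_mul_of_nonneg_left h6 (by positivity)
    have hηeq : η * (8 * (K + 1) * P * M₁) = ε * C := by
      rw [hηdef]; field_simp
    have hco : (K * 2 * P * η) * (2 * (M₁/C)) ≤ ε/2 := by
      have h6 : (K * 2 * P * η) * (2 * (M₁/C)) = (4 * K * P * M₁ * η) / C := by ring
      rw [h6, div_le_iff₀ hC]
      nlinarith [hηeq, hη.le, mul_nonneg (mul_nonneg hP.le hM10.le) hη.le, hK0]
    calc ∑ j ∈ Finset.Ico (m+1) (n+1), a j * b (n-j)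
        ≤ (K * (2 * P * (n:ℝ)^(-(β+1)))) * (η * ((n:ℝ)+1)) := h1.trans h2
      _ = (K * 2 * P * η) * ((n:ℝ)^(-(β+1)) * ((n:ℝ)+1)) := by ring
      _ ≤ (K * 2 * P * η) * (2 * (M₁/C * G n)) := h4.trans h5
      _ = ((K * 2 * P * η) * (2 * (M₁/C))) * G n := by ring
      _ ≤ ε/2 * G n := mul_le_mul_of_nonneg_right hco (hG0 n)
  rw [Real.norm_of_nonneg (hc0 n), Real.norm_of_nonneg (hG0 n), hsplit]
  linarith [hS1, hS2]
end

section
/- Fix β ∈ (0,1), set q = 1/(1+2β), and fix t ∈ (0,1). Then as n → ∞, (q/n^β) ∫_1^{(nt)^{1/q}} s^{-q(1+β)} (1 - s^q/n)^{-β} ds → ∫_0^t u^{β-1} (1-u)^{-β} du, with error O(n^{-β}). -/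
open Filter Asymptotics intervalIntegral

open Set in
private lemma arcsine_key
    (β : ℝ) (hβ : β ∈ Set.Ioo (0 : ℝ) 1)
    (q : ℝ) (hq : q = 1 / (1 + 2 * β))
    (t : ℝ) (ht : t ∈ Set.Ioo (0 : ℝ) 1)
    (n : ℕ) (hn : 1 / t ≤ (n : ℝ)) :
    (q / (n : ℝ) ^ β) *
        ∫ s in (1 : ℝ)..(((n : ℝ) * t) ^ (1 / q)),
          s ^ (-(q * (1 + β))) * (1 - s ^ q / (n : ℝ)) ^ (-β)
      = ∫ u in (1 / (n : ℝ))..t, u ^ (β - 1) * (1 - u) ^ (-β) := by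
  obtain ⟨hβ0, hβ1⟩ := hβ
  obtain ⟨ht0, ht1⟩ := ht
  have hq0 : 0 < q := by rw [hq]; positivity
  have hqinv : 1 / q = 1 + 2 * β := by rw [hq]; field_simp
  have hn0 : (0 : ℝ) < n := lt_of_lt_of_le (by positivity) hn
  have hnt : 1 / (n : ℝ) ≤ t := (div_le_iff₀ hn0).mpr (by
    rw [mul_comm]; exact (div_le_iff₀ ht0).mp hn)
  have huIcc : uIcc (1 / (n : ℝ)) t = Icc (1 / (n : ℝ)) t := uIcc_of_le hnt
  set φ : ℝ → ℝ := fun u => ((n : ℝ) * u) ^ (1 / q) with hφ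
  set φ' : ℝ → ℝ := fun u => (1 / q) * ((n : ℝ) * u) ^ (1 / q - 1) * n with hφ'
  have hmem : ∀ x ∈ uIcc (1 / (n : ℝ)) t, 1 ≤ (n : ℝ) * x ∧ (n : ℝ) * x ≤ (n : ℝ) * t := by
    intro x hx
    rw [huIcc] at hx
    constructor
    · calc (1:ℝ) = (n : ℝ) * (1 / n) := by field_simp
        _ ≤ (n : ℝ) * x := by gcongr; exact hx.1
    · gcongr; exact hx.2
  have hderiv : ∀ x ∈ uIcc (1 / (n : ℝ)) t, HasDerivAt φ (φ' x) x := by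
    intro x hx
    have h1 : HasDerivAt (fun u : ℝ => (n : ℝ) * u) (n : ℝ) x := by
      simpa using (hasDerivAt_id x).const_mul (n : ℝ)
    have h2 := (Real.hasDerivAt_rpow_const (p := 1 / q)
      (Or.inl (by linarith [(hmem x hx).1]))).comp x h1
    simpa [φ, φ', Function.comp_def, mul_comm, mul_assoc, mul_left_comm] using h2
  have hcontφ' : ContinuousOn φ' (uIcc (1 / (n : ℝ)) t) := by
    apply ContinuousOn.mul _ continuousOn_const
    apply ContinuousOn.mul continuousOn_const
    apply ContinuousOn.rpow_const (by fun_prop)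
    intro x hx
    exact Or.inl (by linarith [(hmem x hx).1])
  have hφpow : ∀ x : ℝ, 0 ≤ (n:ℝ) * x → φ x ^ q = (n : ℝ) * x := by
    intro x hx
    simp only [hφ]
    rw [← Real.rpow_mul hx, one_div_mul_cancel (by positivity : q ≠ 0), Real.rpow_one]
  have himg : φ '' uIcc (1 / (n : ℝ)) t ⊆ {s : ℝ | 1 ≤ s ∧ s ^ q ≤ (n:ℝ) * t} := by
    rintro _ ⟨x, hx, rfl⟩
    obtain ⟨h1, h2⟩ := hmem x hx
    constructor
    · rw [show (1:ℝ) = 1 ^ (1/q) by simp]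
      exact Real.rpow_le_rpow (by norm_num) h1 (by positivity)
    · rw [hφpow x (by linarith)]; exact h2
  set g : ℝ → ℝ := fun s => s ^ (-(q * (1 + β))) * (1 - s ^ q / (n : ℝ)) ^ (-β) with hg
  have hne : ∀ x ∈ {s : ℝ | 1 ≤ s ∧ s ^ q ≤ (n:ℝ) * t}, x ≠ 0 ∨ (0:ℝ) ≤ 1 := by
    intro x hx
    left
    intro h
    rw [h] at hx
    exact absurd hx.1 (by norm_num)
  have hcontg : ContinuousOn g (φ '' uIcc (1 / (n : ℝ)) t) := by
    apply ContinuousOn.mono _ himg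
    apply ContinuousOn.mul
    · apply ContinuousOn.rpow_const continuousOn_id
      intro x hx
      left
      simp only [id_eq]
      intro h
      rw [h] at hx
      exact absurd hx.1 (by norm_num)
    · apply ContinuousOn.rpow_const
      · apply ContinuousOn.sub continuousOn_const
        apply ContinuousOn.div_const
        apply ContinuousOn.rpow_const continuousOn_id
        intro x hx
        left
        simp only [id_eq]
        intro h
        rw [h] at hx
        exact absurd hx.1 (by norm_num)
      · intro x hx
        left
        have h2 : x ^ q / (n : ℝ) ≤ t := (div_le_iff₀ hn0).mpr (by
          rw [mul_comm]; exact hx.2)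
        intro h
        rw [sub_eq_zero] at h
        rw [← h] at h2
        linarith
  have hCoV := integral_comp_smul_deriv' hderiv hcontφ' hcontg
  have hφa : φ (1 / (n : ℝ)) = 1 := by
    simp only [hφ]
    rw [mul_one_div, div_self hn0.ne', Real.one_rpow]
  have hφb : φ t = ((n : ℝ) * t) ^ (1 / q) := rfl
  rw [hφa, hφb] at hCoV
  rw [← hCoV]
  have hinteq : ∀ x ∈ uIcc (1 / (n : ℝ)) t,
      φ' x • (g ∘ φ) x = ((n : ℝ) ^ β / q) * (x ^ (β - 1) * (1 - x) ^ (-β)) := by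
    intro x hx
    obtain ⟨h1, -⟩ := hmem x hx
    have hx0 : 0 < x := by
      rw [huIcc] at hx
      exact lt_of_lt_of_le (by positivity) hx.1
    have hnx0 : (0 : ℝ) < (n : ℝ) * x := by positivity
    have e1 : φ x ^ (-(q * (1 + β))) = ((n:ℝ) * x) ^ (-(1 + β)) := by
      simp only [hφ]
      rw [← Real.rpow_mul hnx0.le]
      congr 1
      field_simp
    have e2 : (1 - φ x ^ q / (n : ℝ)) = 1 - x := by
      rw [hφpow x hnx0.le]
      field_simp
    simp only [Function.comp, hg, smul_eq_mul, hφ']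
    rw [e1, e2]
    have e3 : ((n:ℝ) * x) ^ (1 / q - 1) * ((n:ℝ) * x) ^ (-(1 + β))
        = ((n:ℝ) * x) ^ (β - 1) := by
      rw [← Real.rpow_add hnx0]
      congr 1
      rw [hqinv]; ring
    have e4 : ((n:ℝ) * x) ^ (β - 1) = (n:ℝ) ^ (β - 1) * x ^ (β - 1) := by
      exact Real.mul_rpow (by positivity) hx0.le
    have e5 : (n:ℝ) * (n:ℝ) ^ (β - 1) = (n:ℝ) ^ β := by
      nth_rewrite 1 [← Real.rpow_one (n:ℝ)]
      rw [← Real.rpow_add hn0]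
      ring_nf
    linear_combination (1/q) * (n:ℝ) * (1-x)^(-β) * e3
      + (1/q) * (n:ℝ) * (1-x)^(-β) * e4
      + (1/q) * x^(β-1) * (1-x)^(-β) * e5
  rw [integral_congr hinteq]
  rw [integral_const_mul]
  rw [← mul_assoc]
  rw [div_mul_div_comm, mul_comm q ((n:ℝ)^β), div_self (by positivity), one_mul]

/-- The key integral computation in the arcsine law: with `q = 1/(1+2β)` and `t ∈ (0,1)`,
`(q/n^β) ∫_1^{(nt)^{1/q}} s^{-q(1+β)} (1 - s^q/n)^{-β} ds → ∫_0^t u^{β-1}(1-u)^{-β} du`,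
with error `O(n^{-β})`. -/
theorem arcsine_integral_limit
    (β : ℝ) (hβ : β ∈ Set.Ioo (0 : ℝ) 1)
    (q : ℝ) (hq : q = 1 / (1 + 2 * β))
    (t : ℝ) (ht : t ∈ Set.Ioo (0 : ℝ) 1) :
    Tendsto
      (fun n : ℕ => (q / (n : ℝ) ^ β) *
        ∫ s in (1 : ℝ)..(((n : ℝ) * t) ^ (1 / q)),
          s ^ (-(q * (1 + β))) * (1 - s ^ q / (n : ℝ)) ^ (-β))
      atTop (nhds (∫ u in (0 : ℝ)..t, u ^ (β - 1) * (1 - u) ^ (-β))) ∧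
    (fun n : ℕ =>
        (q / (n : ℝ) ^ β) *
          (∫ s in (1 : ℝ)..(((n : ℝ) * t) ^ (1 / q)),
            s ^ (-(q * (1 + β))) * (1 - s ^ q / (n : ℝ)) ^ (-β)) -
          ∫ u in (0 : ℝ)..t, u ^ (β - 1) * (1 - u) ^ (-β))
      =O[atTop] fun n : ℕ => (n : ℝ) ^ (-β) := by
  obtain ⟨hβ0, hβ1⟩ := hβ
  obtain ⟨ht0, ht1⟩ := ht
  set h : ℝ → ℝ := fun u => u ^ (β - 1) * (1 - u) ^ (-β) with hh
  have hInt : ∀ a b : ℝ, 0 ≤ a → 0 ≤ b → a ≤ t → b ≤ t →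
      IntervalIntegrable h MeasureTheory.volume a b := by
    intro a b ha hb hat hbt
    apply IntervalIntegrable.mul_continuousOn
    · exact intervalIntegral.intervalIntegrable_rpow' (by linarith)
    · apply ContinuousOn.rpow_const (by fun_prop)
      intro x hx
      left
      have hx2 : x ≤ max a b := (hx.2 : x ≤ max a b)
      have : x ≤ t := le_trans hx2 (max_le hat hbt)
      intro hc
      rw [sub_eq_zero] at hc
      linarith [hc ▸ this]
  set C : ℝ := (1 - t) ^ (-β) / β with hC
  have hC0 : 0 ≤ C :=
    div_nonneg (Real.rpow_nonneg (by linarith) _) hβ0.le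
  have hbound : ∀ n : ℕ, 1 / t ≤ (n : ℝ) →
      |(q / (n : ℝ) ^ β) *
          (∫ s in (1 : ℝ)..(((n : ℝ) * t) ^ (1 / q)),
            s ^ (-(q * (1 + β))) * (1 - s ^ q / (n : ℝ)) ^ (-β)) -
          ∫ u in (0 : ℝ)..t, h u| ≤ C * (n : ℝ) ^ (-β) := by
    intro n hn
    have hn0 : (0 : ℝ) < n := lt_of_lt_of_le (by positivity) hn
    have hnt : 1 / (n : ℝ) ≤ t := (div_le_iff₀ hn0).mpr (by
      rw [mul_comm]; exact (div_le_iff₀ ht0).mp hn)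
    rw [arcsine_key β ⟨hβ0, hβ1⟩ q hq t ⟨ht0, ht1⟩ n hn]
    have hadj := intervalIntegral.integral_add_adjacent_intervals
      (hInt 0 (1 / n) le_rfl (by positivity) ht0.le hnt)
      (hInt (1 / n) t (by positivity) ht0.le hnt le_rfl)
    have hdiff : (∫ u in (1 / (n:ℝ))..t, h u) - ∫ u in (0:ℝ)..t, h u
        = -∫ u in (0:ℝ)..(1 / (n:ℝ)), h u := by
      rw [← hadj]; ring
    rw [hdiff, abs_neg]
    have hmono : ∀ u ∈ Set.Icc (0:ℝ) (1 / n), h u ≤ (1 - t) ^ (-β) * u ^ (β - 1) := by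
      intro u hu
      have hu1 : u ≤ t := le_trans hu.2 hnt
      have h1u : 0 < 1 - t := by linarith
      have : (1 - u) ^ (-β) ≤ (1 - t) ^ (-β) :=
        Real.rpow_le_rpow_of_nonpos h1u (by linarith) (by linarith)
      calc h u = u ^ (β - 1) * (1 - u) ^ (-β) := rfl
        _ ≤ u ^ (β - 1) * (1 - t) ^ (-β) := by
            apply mul_le_mul_of_nonneg_left this (Real.rpow_nonneg hu.1 _)
        _ = (1 - t) ^ (-β) * u ^ (β - 1) := mul_comm _ _
    have hnonneg : ∀ u ∈ Set.Icc (0:ℝ) (1 / n), 0 ≤ h u := by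
      intro u hu
      have hu1 : u ≤ t := le_trans hu.2 hnt
      apply mul_nonneg (Real.rpow_nonneg hu.1 _)
      apply Real.rpow_nonneg
      linarith
    have hIpow : IntervalIntegrable (fun u : ℝ => (1 - t) ^ (-β) * u ^ (β - 1))
        MeasureTheory.volume 0 (1 / n) := by
      exact (intervalIntegral.intervalIntegrable_rpow'
        (by linarith : (-1:ℝ) < β - 1)).const_mul _
    have hle1 : (∫ u in (0:ℝ)..(1 / (n:ℝ)), h u)
        ≤ ∫ u in (0:ℝ)..(1 / (n:ℝ)), (1 - t) ^ (-β) * u ^ (β - 1) := by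
      apply intervalIntegral.integral_mono_on (by positivity)
        (hInt 0 (1 / n) le_rfl (by positivity) ht0.le hnt) hIpow hmono
    have hge0 : 0 ≤ ∫ u in (0:ℝ)..(1 / (n:ℝ)), h u := by
      apply intervalIntegral.integral_nonneg (by positivity) hnonneg
    have hval : (∫ u in (0:ℝ)..(1 / (n:ℝ)), u ^ (β - 1)) = (n : ℝ) ^ (-β) / β := by
      rw [integral_rpow (Or.inl (by linarith))]
      rw [Real.zero_rpow (by linarith)]
      rw [show β - 1 + 1 = β by ring]
      rw [one_div, Real.inv_rpow (by positivity), ← Real.rpow_neg (by positivity)]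
      ring
    rw [abs_of_nonneg hge0]
    calc (∫ u in (0:ℝ)..(1 / (n:ℝ)), h u)
        ≤ ∫ u in (0:ℝ)..(1 / (n:ℝ)), (1 - t) ^ (-β) * u ^ (β - 1) := hle1
      _ = (1 - t) ^ (-β) * ((n : ℝ) ^ (-β) / β) := by
          rw [intervalIntegral.integral_const_mul, hval]
      _ = C * (n : ℝ) ^ (-β) := by rw [hC]; ring
  obtain ⟨N, hN⟩ := exists_nat_ge (1 / t)
  have hBigO : (fun n : ℕ =>
        (q / (n : ℝ) ^ β) *
          (∫ s in (1 : ℝ)..(((n : ℝ) * t) ^ (1 / q)),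
            s ^ (-(q * (1 + β))) * (1 - s ^ q / (n : ℝ)) ^ (-β)) -
          ∫ u in (0 : ℝ)..t, u ^ (β - 1) * (1 - u) ^ (-β))
      =O[atTop] fun n : ℕ => (n : ℝ) ^ (-β) := by
    rw [isBigO_iff]
    refine ⟨C, ?_⟩
    filter_upwards [eventually_ge_atTop N] with n hn
    have hn' : 1 / t ≤ (n : ℝ) := le_trans hN (by exact_mod_cast hn)
    rw [Real.norm_eq_abs, Real.norm_eq_abs,
      abs_of_nonneg (Real.rpow_nonneg (Nat.cast_nonneg n) _)]
    exact hbound n hn'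
  refine ⟨?_, hBigO⟩
  have hg0 : Tendsto (fun n : ℕ => (n : ℝ) ^ (-β)) atTop (nhds 0) :=
    (tendsto_rpow_neg_atTop hβ0).comp tendsto_natCast_atTop_atTop
  have hd0 := hBigO.trans_tendsto hg0
  have := hd0.add (tendsto_const_nhds
    (x := ∫ u in (0 : ℝ)..t, u ^ (β - 1) * (1 - u) ^ (-β)) (f := atTop))
  simpa using this
end
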